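/- Let D be a distribution on real values a_1 < ... < a_k with pmf p and tail CDF q_c = \sum_{b \ge c} p_b, and let \delta \in (0,1). For each c \in [k], suppose we observe m_c i.i.d. binary samples of the form 1[X \ge a_c] with X \sim D, all samples mutually independent; let \hat{p}_c be the empirical mean of these m_c binary samples, and set \epsilon_c = \sqrt{\log(2k/\delta)/(2 m_c)}. Let E = E_k be the output of the censored-feedback recursion with inputs \hat{p}_c and \epsilon_c. Then with probability at least 1 - \delta: (i) E stochastically dominates p, i.e. \sum_{j \ge b} E(j) \ge \sum_{j \ge b} p_j for every b \in [k]; and (ii) for every c \in [k], |\sum_{j \ge c} E(j) - q_c| < \sqrt{2 \log(2k/\delta)/m_c}, i.e., the total variation distance between the binary compressions at a_c of E and of p is less than \sqrt{2 \log(2k/\delta)/m_c}. -/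

import Mathlib

open Finset MeasureTheory ProbabilityTheory
open scoped ENNReal NNReal

/-- The censored-feedback recursion. -/
noncomputable def censoredRec (phat eps : ℕ → ℝ) : ℕ → ℕ → ℝ
  | 0 => fun _ => 0
  | 1 => fun b => if b = 1 then 1 else 0
  | (c + 2) => fun b =>
      if b = c + 2 then min (censoredRec phat eps (c + 1) (c + 1)) (phat (c + 2) + eps (c + 2))
      else if b = c + 1 then
        censoredRec phat eps (c + 1) (c + 1)
          - min (censoredRec phat eps (c + 1) (c + 1)) (phat (c + 2) + eps (c + 2))
      else censoredRec phat eps (c + 1) b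

/-- sampling under binary feedback. Let `D` be a distribution on
values `a_1 < ⋯ < a_k` with pmf `p` and tail CDF `q_c = ∑_{b ≥ c} p_b`. For each level
`c ∈ [k]` we observe `m_c` i.i.d. binary samples `Y c j ~ 1[X ≥ a_c]` with `X ~ D`,
all mutually independent. With `phat_c` the empirical mean of the `m_c` binary samples at
level `c` and `eps_c = √(log(2k/δ)/(2 m_c))`, let `E = E_k` be the output of the
censored-feedback recursion. Then with probability at least `1 - δ`: (i) `E`
stochastically dominates `p`, and (ii) for every `c ∈ [k]`,
`|∑_{j ≥ c} E j - q_c| < √(2 log(2k/δ)/m_c)`, i.e. the total variation distance between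
the binary compressions at `a_c` of `E` and of `p` is less than `√(2 log(2k/δ)/m_c)`. -/
noncomputable def tailT (phat eps : ℕ → ℝ) : ℕ → ℝ
  | 0 => 1
  | 1 => 1
  | (n + 2) => min (tailT phat eps (n + 1)) (phat (n + 2) + eps (n + 2))

lemma tailT_one (phat eps : ℕ → ℝ) : tailT phat eps 1 = 1 := rfl

lemma tailT_succ (phat eps : ℕ → ℝ) {n : ℕ} (hn : 1 ≤ n) :
    tailT phat eps (n + 1) = min (tailT phat eps n) (phat (n + 1) + eps (n + 1)) := by
  obtain ⟨c, rfl⟩ : ∃ c, n = c + 1 := ⟨n - 1, by omega⟩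
  rfl

lemma censoredRec_char (phat eps : ℕ → ℝ) :
    ∀ n, 1 ≤ n →
      censoredRec phat eps n n = tailT phat eps n ∧
      ∀ j, 1 ≤ j → j < n →
        censoredRec phat eps n j = tailT phat eps j - tailT phat eps (j + 1) := by
  intro n hn
  induction n, hn using Nat.le_induction with
  | base => exact ⟨by simp [censoredRec, tailT], fun j h1 h2 => by omega⟩
  | succ n hn ih =>
    obtain ⟨hdiag, hlow⟩ := ih
    obtain ⟨c, rfl⟩ : ∃ c, n = c + 1 := ⟨n - 1, by omega⟩
    constructor
    · show censoredRec phat eps (c + 2) (c + 2) = _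
      rw [tailT_succ phat eps (by omega : 1 ≤ c + 1)]
      simp [censoredRec, hdiag]
    · intro j hj1 hj2
      rcases eq_or_lt_of_le (by omega : j ≤ c + 1) with hj | hj
      · subst hj
        show censoredRec phat eps (c + 2) (c + 1) = _
        rw [tailT_succ phat eps (by omega : 1 ≤ c + 1)]
        simp [censoredRec, hdiag]
      · show censoredRec phat eps (c + 2) j = _
        have h1 : ¬ (j = c + 2) := by omega
        have h2 : ¬ (j = c + 1) := by omega
        simp only [censoredRec, h1, h2, if_false]
        exact hlow j hj1 hj


lemma censoredRec_tail_sum (phat eps : ℕ → ℝ) {n b : ℕ} (hb : 1 ≤ b) (hbn : b ≤ n) :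
    ∑ j ∈ Finset.Icc b n, censoredRec phat eps n j = tailT phat eps b := by
  have hn : 1 ≤ n := hb.trans hbn
  obtain ⟨hdiag, hlow⟩ := censoredRec_char phat eps n hn
  rw [← Finset.Ico_add_one_right_eq_Icc, Finset.sum_Ico_succ_top hbn, hdiag]
  have : ∑ j ∈ Finset.Ico b n, censoredRec phat eps n j
      = ∑ j ∈ Finset.Ico b n, (tailT phat eps j - tailT phat eps (j + 1)) := by
    refine Finset.sum_congr rfl fun j hj => ?_
    rw [Finset.mem_Ico] at hj
    exact hlow j (hb.trans hj.1) hj.2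
  rw [this, Finset.sum_Ico_eq_sub _ hbn, Finset.sum_range_sub' (tailT phat eps),
    Finset.sum_range_sub' (tailT phat eps)]
  ring

lemma tailT_ge (phat eps p : ℕ → ℝ) (k : ℕ)
    (hq1 : ∑ i ∈ Finset.Icc 1 k, p i = 1)
    (hp0 : ∀ i ∈ Finset.Icc 1 k, 0 ≤ p i)
    (hlt : ∀ c ∈ Finset.Icc 1 k, ∑ b ∈ Finset.Icc c k, p b < phat c + eps c) :
    ∀ b, 1 ≤ b → b ≤ k → ∑ j ∈ Finset.Icc b k, p j ≤ tailT phat eps b := by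
  intro b hb
  induction b, hb using Nat.le_induction with
  | base => intro _; rw [tailT_one, hq1]
  | succ b hb ih =>
    intro hbk
    rw [tailT_succ phat eps hb]
    refine le_min ?_ (le_of_lt (hlt (b + 1) (Finset.mem_Icc.mpr ⟨by omega, hbk⟩)))
    refine le_trans ?_ (ih (by omega))
    refine Finset.sum_le_sum_of_subset_of_nonneg ?_ fun i hi _ => hp0 i ?_
    · exact Finset.Icc_subset_Icc_left (by omega)
    · rw [Finset.mem_Icc] at hi ⊢; omega


lemma hoeffding_bernoulli (q : ℝ) (hq0 : 0 ≤ q) (hq1 : q ≤ 1) (t : ℝ) :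
    Real.exp (t * (0 - q)) * (1 - q) + Real.exp (t * (1 - q)) * q ≤ Real.exp (t ^ 2 / 8) := by
  set D : ℝ → ℝ := fun s => 1 - q + q * Real.exp s with hDdef
  have hD : ∀ s, 0 < D s := by
    intro s
    rcases hq1.lt_or_eq with h | h
    · have : 0 ≤ q * Real.exp s := mul_nonneg hq0 (Real.exp_pos s).le
      simp only [hDdef]; linarith
    · subst h
      simp only [hDdef]
      simpa using Real.exp_pos s
  set u : ℝ → ℝ := fun s => q * Real.exp s / D s with hudef
  set g : ℝ → ℝ := fun s => s ^ 2 / 8 + q * s - Real.log (D s) with hgdef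
  set G : ℝ → ℝ := fun s => s / 4 + q - u s with hGdef
  have hDder : ∀ s, HasDerivAt D (q * Real.exp s) s := by
    intro s
    exact ((Real.hasDerivAt_exp s).const_mul q).const_add (1 - q)
  have hu' : ∀ s, HasDerivAt u (u s - u s ^ 2) s := by
    intro s
    have h := ((Real.hasDerivAt_exp s).const_mul q).div (hDder s) (hD s).ne'
    refine h.congr_deriv ?_
    have := (hD s).ne'
    simp only [hudef]
    field_simp
  have hlog : ∀ s, HasDerivAt (fun x => Real.log (D x)) (u s) s := by
    intro s
    have h := (Real.hasDerivAt_log (hD s).ne').comp s (hDder s)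
    refine h.congr_deriv ?_
    simp only [hudef]
    ring
  have hg' : ∀ s, HasDerivAt g (G s) s := by
    intro s
    have h1 := ((hasDerivAt_pow 2 s).div_const 8).add ((hasDerivAt_id s).const_mul q)
    have := h1.sub (hlog s)
    refine this.congr_deriv ?_
    simp only [hGdef, id_eq]
    push_cast
    ring
  have hG' : ∀ s, HasDerivAt G (1 / 4 - (u s - u s ^ 2)) s := by
    intro s
    have h1 : HasDerivAt (fun x : ℝ => x / 4 + q) (1 / 4) s := by
      simpa using ((hasDerivAt_id s).div_const 4).add_const q
    exact h1.sub (hu' s)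
  have hGmono : Monotone G := by
    refine monotone_of_deriv_nonneg (fun s => (hG' s).differentiableAt) fun s => ?_
    rw [(hG' s).deriv]
    nlinarith [sq_nonneg (u s - 1 / 2)]
  have hG0 : G 0 = 0 := by
    have : D 0 = 1 := by simp [hDdef]
    simp [hGdef, hudef, this]
  have hg0 : g 0 = 0 := by
    have : D 0 = 1 := by simp [hDdef]
    simp [hgdef, this]
  have hgd : Differentiable ℝ g := fun s => (hg' s).differentiableAt
  have key : 0 ≤ g t := by
    rcases le_total 0 t with ht | ht
    · have hmo : MonotoneOn g (Set.Ici (0 : ℝ)) := by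
        refine monotoneOn_of_deriv_nonneg (convex_Ici 0) hgd.continuous.continuousOn
          (hgd.differentiableOn) fun x hx => ?_
        rw [(hg' x).deriv]
        rw [interior_Ici] at hx
        calc (0 : ℝ) = G 0 := hG0.symm
          _ ≤ G x := hGmono (le_of_lt hx)
      have := hmo (Set.self_mem_Ici) (Set.mem_Ici.mpr ht) ht
      rwa [hg0] at this
    · have hmo : AntitoneOn g (Set.Iic (0 : ℝ)) := by
        refine antitoneOn_of_deriv_nonpos (convex_Iic 0) hgd.continuous.continuousOn
          (hgd.differentiableOn) fun x hx => ?_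
        rw [(hg' x).deriv]
        rw [interior_Iic] at hx
        calc G x ≤ G 0 := hGmono (le_of_lt hx)
          _ = 0 := hG0
      have := hmo (Set.mem_Iic.mpr ht) (Set.self_mem_Iic) ht
      rwa [hg0] at this
  have hlogle : Real.log (D t) ≤ t ^ 2 / 8 + q * t := by
    simp only [hgdef] at key; linarith
  have e1 : t * (0 - q) = -(t * q) := by ring
  have e2 : t * (1 - q) = t + -(t * q) := by ring
  have lhseq : Real.exp (t * (0 - q)) * (1 - q) + Real.exp (t * (1 - q)) * q
      = Real.exp (-(t * q)) * D t := by
    rw [e1, e2, Real.exp_add]; simp only [hDdef]; ring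
  rw [lhseq, ← Real.exp_log (hD t), ← Real.exp_add]
  apply Real.exp_le_exp.mpr
  linarith


lemma iIndepFun_comp_inj {Ω ι κ β : Type*} [MeasurableSpace Ω] {P : Measure Ω}
    [MeasurableSpace β] {f : ι → Ω → β}
    (h : iIndepFun f P)
    (g : κ → ι) (hg : Function.Injective g) :
    iIndepFun (fun j => f (g j)) P := by
  classical
  rw [iIndepFun_iff_measure_inter_preimage_eq_mul] at h ⊢
  intro S sets hsets
  set sets' : ι → Set β := fun i =>
    if hi : ∃ j, j ∈ S ∧ g j = i then sets hi.choose else Set.univ with hsets'def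
  have key : ∀ j ∈ S, sets' (g j) = sets j := by
    intro j hj
    have hex : ∃ j', j' ∈ S ∧ g j' = g j := ⟨j, hj, rfl⟩
    have hspec := hex.choose_spec
    simp only [hsets'def, dif_pos hex]
    exact congrArg sets (hg hspec.2)
  have hmeas' : ∀ i ∈ S.image g, MeasurableSet (sets' i) := by
    intro i hi
    simp only [hsets'def]
    split_ifs with hex
    · exact hsets _ hex.choose_spec.1
    · exact MeasurableSet.univ
  have h2 := h (S.image g) hmeas'
  have hinter : (⋂ i ∈ (S.image g : Finset ι), f i ⁻¹' sets' i)
      = ⋂ j ∈ S, f (g j) ⁻¹' sets j := by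
    rw [← Finset.set_biInter_coe, Finset.coe_image, Set.biInter_image,
      Finset.set_biInter_coe]
    exact Set.iInter₂_congr fun j hj => by rw [key j hj]
  have hprod : (∏ i ∈ S.image g, P (f i ⁻¹' sets' i))
      = ∏ j ∈ S, P (f (g j) ⁻¹' sets j) := by
    rw [Finset.prod_image (fun a _ b _ hab => hg hab)]
    exact Finset.prod_congr rfl fun j hj => by rw [key j hj]
  rw [← hinter, ← hprod]
  exact h2


lemma twopoint_exp {Ω : Type*} [MeasurableSpace Ω] (P : Measure Ω) (Y : Ω → ℝ)
    (hY : Measurable Y) (q : ℝ) (hq0 : 0 ≤ q) (hq1 : q ≤ 1)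
    (hmap : Measure.map Y P
      = ENNReal.ofReal (1 - q) • Measure.dirac (0 : ℝ)
        + ENNReal.ofReal q • Measure.dirac (1 : ℝ))
    (t : ℝ) :
    Integrable (fun ω => Real.exp (t * (Y ω - q))) P ∧
    ∫ ω, Real.exp (t * (Y ω - q)) ∂P
      = Real.exp (t * (0 - q)) * (1 - q) + Real.exp (t * (1 - q)) * q := by
  set f : ℝ → ℝ := fun x => Real.exp (t * (x - q)) with hf
  have hfc : Continuous f := by fun_prop
  have hintd : ∀ a : ℝ, Integrable f (Measure.dirac a) := by
    intro a
    refine ⟨hfc.aestronglyMeasurable, ?_⟩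
    rw [HasFiniteIntegral, lintegral_dirac]
    exact ENNReal.coe_lt_top
  have hi0 : Integrable f (ENNReal.ofReal (1 - q) • Measure.dirac (0:ℝ)) := (hintd 0).smul_measure ENNReal.ofReal_ne_top
  have hi1 : Integrable f (ENNReal.ofReal q • Measure.dirac (1:ℝ)) := (hintd 1).smul_measure ENNReal.ofReal_ne_top
  have hintμ : Integrable f (Measure.map Y P) := by
    rw [hmap]; exact hi0.add_measure hi1
  have hcomp : Integrable (fun ω => f (Y ω)) P :=
    (integrable_map_measure hfc.aestronglyMeasurable hY.aemeasurable).mp hintμ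
  refine ⟨hcomp, ?_⟩
  show ∫ ω, f (Y ω) ∂P = _
  calc ∫ ω, f (Y ω) ∂P = ∫ x, f x ∂(Measure.map Y P) :=
        (integral_map hY.aemeasurable hfc.aestronglyMeasurable).symm
    _ = Real.exp (t * (0 - q)) * (1 - q) + Real.exp (t * (1 - q)) * q := by
        rw [hmap, integral_add_measure hi0 hi1, integral_smul_measure,
          integral_smul_measure, integral_dirac, integral_dirac,
          ENNReal.toReal_ofReal (by linarith), ENNReal.toReal_ofReal hq0]
        simp only [smul_eq_mul, hf]
        ring

lemma chernoff_binary {Ω : Type*} [MeasurableSpace Ω] (P : Measure Ω) [IsProbabilityMeasure P]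
    (n : ℕ) (hn : 1 ≤ n) (Y : ℕ → Ω → ℝ) (hYm : ∀ j, Measurable (Y j))
    (hind : iIndepFun Y P)
    (q : ℝ) (hq0 : 0 ≤ q) (hq1 : q ≤ 1)
    (hmap : ∀ j ∈ Finset.range n, Measure.map (Y j) P
      = ENNReal.ofReal (1 - q) • Measure.dirac (0 : ℝ)
        + ENNReal.ofReal q • Measure.dirac (1 : ℝ))
    (ε : ℝ) (hε : 0 < ε) :
    P {ω | ε ≤ |(1 / (n : ℝ)) * (∑ j ∈ Finset.range n, Y j ω) - q|}
      ≤ ENNReal.ofReal (2 * Real.exp (-2 * n * ε ^ 2)) := by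
  have hnpos : (0 : ℝ) < n := by exact_mod_cast hn
  set Z : ℕ → Ω → ℝ := fun j ω => Y j ω - q with hZ
  have hZm : ∀ j, Measurable (Z j) := fun j => (hYm j).sub_const q
  have hZind : iIndepFun Z P :=
    hind.comp (fun _ => fun x => x - q) (fun _ => measurable_id.sub_const q)
  have hmgf : ∀ t : ℝ, ∀ j ∈ Finset.range n,
      Integrable (fun ω => Real.exp (t * Z j ω)) P ∧ mgf (Z j) P t ≤ Real.exp (t ^ 2 / 8) := by
    intro t j hj
    obtain ⟨hint, heq⟩ := twopoint_exp P (Y j) (hYm j) q hq0 hq1 (hmap j hj) t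
    refine ⟨hint, ?_⟩
    show (∫ ω, Real.exp (t * Z j ω) ∂P) ≤ _
    simp only [hZ]
    rw [heq]
    exact hoeffding_bernoulli q hq0 hq1 t
  have hXint : ∀ t : ℝ, Integrable (fun ω => Real.exp (t * (∑ j ∈ Finset.range n, Z j) ω)) P :=
    fun t => hZind.integrable_exp_mul_sum hZm (fun j hj => (hmgf t j hj).1)
  have hXmgf : ∀ t : ℝ, mgf (∑ j ∈ Finset.range n, Z j) P t ≤ Real.exp (t ^ 2 / 8) ^ n := by
    intro t
    rw [hZind.mgf_sum hZm]
    calc ∏ j ∈ Finset.range n, mgf (Z j) P t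
        ≤ ∏ _j ∈ Finset.range n, Real.exp (t ^ 2 / 8) :=
          Finset.prod_le_prod (fun j _ => mgf_nonneg) (fun j hj => (hmgf t j hj).2)
      _ = Real.exp (t ^ 2 / 8) ^ n := by rw [Finset.prod_const, Finset.card_range]
  have hbound : ∀ t : ℝ,
      Real.exp (-t * ((n : ℝ) * ε)) * Real.exp (t ^ 2 / 8) ^ n
        = Real.exp (-t * (n * ε) + n * (t ^ 2 / 8)) := by
    intro t
    rw [← Real.exp_nat_mul, ← Real.exp_add]
  have hup : (P {ω | (n : ℝ) * ε ≤ (∑ j ∈ Finset.range n, Z j) ω}).toReal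
      ≤ Real.exp (-2 * n * ε ^ 2) := by
    have h1 := measure_ge_le_exp_mul_mgf (μ := P) (X := ∑ j ∈ Finset.range n, Z j)
      ((n : ℝ) * ε) (by positivity : (0:ℝ) ≤ 4 * ε) (hXint (4 * ε))
    refine h1.trans ?_
    calc Real.exp (-(4 * ε) * ((n:ℝ) * ε)) * mgf (∑ j ∈ Finset.range n, Z j) P (4 * ε)
        ≤ Real.exp (-(4 * ε) * ((n:ℝ) * ε)) * Real.exp ((4 * ε) ^ 2 / 8) ^ n := by
          exact mul_le_mul_of_nonneg_left (hXmgf (4 * ε)) (Real.exp_pos _).le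
      _ = Real.exp (-2 * n * ε ^ 2) := by
          rw [hbound (4 * ε)]; congr 1; ring
  have hlow : (P {ω | (∑ j ∈ Finset.range n, Z j) ω ≤ -((n : ℝ) * ε)}).toReal
      ≤ Real.exp (-2 * n * ε ^ 2) := by
    have h1 := measure_le_le_exp_mul_mgf (μ := P) (X := ∑ j ∈ Finset.range n, Z j)
      (-((n : ℝ) * ε)) (by nlinarith : -(4 * ε) ≤ 0) (hXint (-(4 * ε)))
    refine h1.trans ?_
    calc Real.exp (-(-(4 * ε)) * -((n:ℝ) * ε)) * mgf (∑ j ∈ Finset.range n, Z j) P (-(4 * ε))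
        ≤ Real.exp (-(-(4 * ε)) * -((n:ℝ) * ε)) * Real.exp ((-(4 * ε)) ^ 2 / 8) ^ n := by
          exact mul_le_mul_of_nonneg_left (hXmgf (-(4 * ε))) (Real.exp_pos _).le
      _ = Real.exp (-2 * n * ε ^ 2) := by
          rw [← Real.exp_nat_mul, ← Real.exp_add]; congr 1; ring
  have hXsum : ∀ ω, (∑ j ∈ Finset.range n, Z j) ω = (∑ j ∈ Finset.range n, Y j ω) - n * q := by
    intro ω
    simp only [Finset.sum_apply, hZ, Finset.sum_sub_distrib, Finset.sum_const,
      Finset.card_range, nsmul_eq_mul]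
  have hsubset : {ω | ε ≤ |(1 / (n : ℝ)) * (∑ j ∈ Finset.range n, Y j ω) - q|}
      ⊆ {ω | (n : ℝ) * ε ≤ (∑ j ∈ Finset.range n, Z j) ω}
        ∪ {ω | (∑ j ∈ Finset.range n, Z j) ω ≤ -((n : ℝ) * ε)} := by
    intro ω hω
    simp only [Set.mem_setOf_eq] at hω
    have hrw : (1 / (n : ℝ)) * (∑ j ∈ Finset.range n, Y j ω) - q
        = (1 / (n : ℝ)) * ((∑ j ∈ Finset.range n, Z j) ω) := by
      rw [hXsum ω]; field_simp
    rw [hrw] at hω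
    rcases le_abs.mp hω with h | h
    · have := mul_le_mul_of_nonneg_left h hnpos.le
      have h2 : (n : ℝ) * ε ≤ (∑ j ∈ Finset.range n, Z j) ω := by
        calc (n : ℝ) * ε ≤ (n : ℝ) * ((1 / (n : ℝ)) * ((∑ j ∈ Finset.range n, Z j) ω)) := this
          _ = (∑ j ∈ Finset.range n, Z j) ω := by field_simp
      exact Or.inl h2
    · have := mul_le_mul_of_nonneg_left h hnpos.le
      have h2 : (n : ℝ) * ε ≤ -((∑ j ∈ Finset.range n, Z j) ω) := by
        calc (n : ℝ) * ε ≤ (n : ℝ) * -((1 / (n : ℝ)) * ((∑ j ∈ Finset.range n, Z j) ω)) := this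
          _ = -((∑ j ∈ Finset.range n, Z j) ω) := by field_simp
      exact Or.inr (by simpa using (by linarith : (∑ j ∈ Finset.range n, Z j) ω ≤ -((n:ℝ) * ε)))
  calc P {ω | ε ≤ |(1 / (n : ℝ)) * (∑ j ∈ Finset.range n, Y j ω) - q|}
      ≤ P ({ω | (n : ℝ) * ε ≤ (∑ j ∈ Finset.range n, Z j) ω}
        ∪ {ω | (∑ j ∈ Finset.range n, Z j) ω ≤ -((n : ℝ) * ε)}) := measure_mono hsubset
    _ ≤ P {ω | (n : ℝ) * ε ≤ (∑ j ∈ Finset.range n, Z j) ω}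
        + P {ω | (∑ j ∈ Finset.range n, Z j) ω ≤ -((n : ℝ) * ε)} := measure_union_le _ _
    _ ≤ ENNReal.ofReal (Real.exp (-2 * n * ε ^ 2)) + ENNReal.ofReal (Real.exp (-2 * n * ε ^ 2)) := by
        gcongr
        · rw [← ENNReal.ofReal_toReal (measure_ne_top P _)]
          exact ENNReal.ofReal_le_ofReal hup
        · rw [← ENNReal.ofReal_toReal (measure_ne_top P _)]
          exact ENNReal.ofReal_le_ofReal hlow
    _ = ENNReal.ofReal (2 * Real.exp (-2 * n * ε ^ 2)) := by
        rw [← ENNReal.ofReal_add (Real.exp_pos _).le (Real.exp_pos _).le, two_mul]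


theorem censoredRec_binary_sampling_dominates_and_close
    (Ω : Type*) [MeasurableSpace Ω] (P : Measure Ω) [IsProbabilityMeasure P]
    (k : ℕ) (hk : 1 ≤ k)
    (a : ℕ → ℝ) (ha : ∀ i ∈ Finset.Icc 1 k, ∀ j ∈ Finset.Icc 1 k, i < j → a i < a j)
    (p : ℕ → ℝ)
    (hp : ∀ i ∈ Finset.Icc 1 k, 0 ≤ p i ∧ p i ≤ 1)
    (hp1 : ∑ i ∈ Finset.Icc 1 k, p i = 1)
    (m : ℕ → ℕ) (hm : ∀ c ∈ Finset.Icc 1 k, 1 ≤ m c)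
    (Y : ℕ → ℕ → Ω → ℝ) (hYmeas : ∀ c j, Measurable (Y c j))
    (hYindep : iIndepFun (fun cj : ℕ × ℕ => Y cj.1 cj.2) P)
    (hYdist : ∀ c ∈ Finset.Icc 1 k, ∀ j ∈ Finset.range (m c),
      Measure.map (Y c j) P
        = ENNReal.ofReal (1 - ∑ b ∈ Finset.Icc c k, p b) • Measure.dirac (0 : ℝ)
            + ENNReal.ofReal (∑ b ∈ Finset.Icc c k, p b) • Measure.dirac (1 : ℝ))
    (δ : ℝ) (hδ0 : 0 < δ) (hδ1 : δ < 1)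
    (phat : Ω → ℕ → ℝ)
    (hphat : ∀ ω c, phat ω c
      = (1 / (m c : ℝ)) * ∑ j ∈ Finset.range (m c), Y c j ω)
    (eps : ℕ → ℝ)
    (heps : ∀ c, eps c = Real.sqrt (Real.log (2 * k / δ) / (2 * (m c : ℝ))))
    (E : Ω → ℕ → ℝ) (hE : ∀ ω, E ω = censoredRec (phat ω) eps k) :
    ENNReal.ofReal (1 - δ) ≤
      P {ω | (∀ b ∈ Finset.Icc 1 k,
                ∑ j ∈ Finset.Icc b k, p j ≤ ∑ j ∈ Finset.Icc b k, E ω j) ∧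
             (∀ c ∈ Finset.Icc 1 k,
                |(∑ j ∈ Finset.Icc c k, E ω j) - ∑ b ∈ Finset.Icc c k, p b|
                  < Real.sqrt (2 * Real.log (2 * k / δ) / (m c : ℝ)))} := by
  classical
  set L : ℝ := Real.log (2 * k / δ) with hLdef
  have hk1 : (1 : ℝ) ≤ (k : ℝ) := by exact_mod_cast hk
  have hL : 0 < L := by
    rw [hLdef]
    apply Real.log_pos
    rw [lt_div_iff₀ hδ0]
    nlinarith
  set q : ℕ → ℝ := fun c => ∑ b ∈ Finset.Icc c k, p b with hqdef
  have hq0 : ∀ c ∈ Finset.Icc 1 k, 0 ≤ q c := by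
    intro c hc
    refine Finset.sum_nonneg fun i hi => (hp i ?_).1
    rw [Finset.mem_Icc] at hi hc ⊢; omega
  have hq1 : ∀ c ∈ Finset.Icc 1 k, q c ≤ 1 := by
    intro c hc
    rw [← hp1]
    refine Finset.sum_le_sum_of_subset_of_nonneg ?_ fun i hi _ => (hp i hi).1
    refine Finset.Icc_subset_Icc_left ?_
    rw [Finset.mem_Icc] at hc; omega
  -- positivity of eps
  have hmpos : ∀ c ∈ Finset.Icc 1 k, (0 : ℝ) < (m c : ℝ) := by
    intro c hc; exact_mod_cast hm c hc
  have hepspos : ∀ c ∈ Finset.Icc 1 k, 0 < eps c := by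
    intro c hc
    rw [heps c]
    exact Real.sqrt_pos.mpr (div_pos hL (by linarith [hmpos c hc]))
  -- bad events
  set A : ℕ → Set Ω :=
    fun c => {ω | eps c ≤ |(1 / (m c : ℝ)) * (∑ j ∈ Finset.range (m c), Y c j ω) - q c|}
    with hAdef
  have hAmeas : ∀ c, MeasurableSet (A c) := by
    intro c
    have hg : Measurable fun ω =>
        |(1 / (m c : ℝ)) * (∑ j ∈ Finset.range (m c), Y c j ω) - q c| := by
      apply Measurable.abs
      apply Measurable.sub_const
      exact (Finset.measurable_sum _ fun j _ => hYmeas c j).const_mul _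
    exact measurableSet_le measurable_const hg
  have hAbound : ∀ c ∈ Finset.Icc 1 k, P (A c) ≤ ENNReal.ofReal (δ / k) := by
    intro c hc
    have hind : iIndepFun (fun j => Y c j) P :=
      iIndepFun_comp_inj hYindep (fun j => (c, j)) (fun a b h => by simpa using h)
    have hb := chernoff_binary P (m c) (hm c hc) (fun j => Y c j) (fun j => hYmeas c j)
      hind (q c) (hq0 c hc) (hq1 c hc) (fun j hj => hYdist c hc j hj) (eps c) (hepspos c hc)
    refine hb.trans (le_of_eq ?_)
    congr 1
    have hepssq : eps c ^ 2 = L / (2 * (m c : ℝ)) := by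
      rw [heps c, Real.sq_sqrt (le_of_lt (div_pos hL (by linarith [hmpos c hc])))]
    rw [hepssq]
    have hmne : (m c : ℝ) ≠ 0 := (hmpos c hc).ne'
    have harg : -2 * (m c : ℝ) * (L / (2 * (m c : ℝ))) = -L := by
      field_simp
    rw [harg]
    have h2k : (0 : ℝ) < 2 * k / δ := by positivity
    have hexp : Real.exp (-L) = δ / (2 * (k : ℝ)) := by
      rw [hLdef, Real.exp_neg, Real.exp_log h2k, inv_div]
    rw [hexp]
    have hkne : (k : ℝ) ≠ 0 := by positivity
    field_simp
  -- union bound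
  set U : Set Ω := ⋃ c ∈ Finset.Icc 1 k, A c with hUdef
  have hUmeas : MeasurableSet U :=
    MeasurableSet.biUnion (Finset.Icc 1 k).countable_toSet fun c _ => hAmeas c
  have hUbound : P U ≤ ENNReal.ofReal δ := by
    calc P U ≤ ∑ c ∈ Finset.Icc 1 k, P (A c) := measure_biUnion_finset_le _ _
      _ ≤ ∑ c' ∈ Finset.Icc 1 k, ENNReal.ofReal (δ / (k : ℝ)) :=
          Finset.sum_le_sum hAbound
      _ = (k : ℝ≥0∞) * ENNReal.ofReal (δ / k) := by
          rw [Finset.sum_const, Nat.card_Icc]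
          simp [nsmul_eq_mul]
      _ = ENNReal.ofReal δ := by
          rw [← ENNReal.ofReal_natCast k, ← ENNReal.ofReal_mul (by positivity)]
          congr 1
          field_simp
  -- the good event is contained in the target
  have hsubset : Uᶜ ⊆ {ω | (∀ b ∈ Finset.Icc 1 k,
                ∑ j ∈ Finset.Icc b k, p j ≤ ∑ j ∈ Finset.Icc b k, E ω j) ∧
             (∀ c ∈ Finset.Icc 1 k,
                |(∑ j ∈ Finset.Icc c k, E ω j) - ∑ b ∈ Finset.Icc c k, p b|
                  < Real.sqrt (2 * Real.log (2 * k / δ) / (m c : ℝ)))} := by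
    intro ω hω
    have hclose : ∀ c ∈ Finset.Icc 1 k, |phat ω c - q c| < eps c := by
      intro c hc
      have : ω ∉ A c := by
        intro hmem
        exact hω (Set.mem_biUnion hc hmem)
      rw [hAdef] at this
      simp only [Set.mem_setOf_eq, not_le] at this
      rw [hphat ω c]
      exact this
    have hlt : ∀ c ∈ Finset.Icc 1 k, q c < phat ω c + eps c := by
      intro c hc
      have h := abs_lt.mp (hclose c hc)
      linarith [h.1]
    have hle : ∀ c ∈ Finset.Icc 1 k, phat ω c < q c + eps c := by
      intro c hc
      have h := abs_lt.mp (hclose c hc)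
      linarith [h.2]
    have hTs : ∀ b ∈ Finset.Icc 1 k,
        ∑ j ∈ Finset.Icc b k, E ω j = tailT (phat ω) eps b := by
      intro b hb
      rw [Finset.mem_Icc] at hb
      rw [hE ω]
      exact censoredRec_tail_sum (phat ω) eps hb.1 hb.2
    have hdom : ∀ b ∈ Finset.Icc 1 k,
        ∑ j ∈ Finset.Icc b k, p j ≤ ∑ j ∈ Finset.Icc b k, E ω j := by
      intro b hb
      rw [hTs b hb]
      rw [Finset.mem_Icc] at hb
      exact tailT_ge (phat ω) eps p k hp1 (fun i hi => (hp i hi).1) hlt b hb.1 hb.2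
    refine ⟨hdom, ?_⟩
    intro c hc
    have hsqrt2 : Real.sqrt (2 * L / (m c : ℝ)) = 2 * eps c := by
      rw [heps c]
      have h4 : 2 * L / (m c : ℝ) = 2 ^ 2 * (L / (2 * (m c : ℝ))) := by
        have := (hmpos c hc).ne'
        field_simp
      rw [h4, Real.sqrt_mul (by norm_num : (0:ℝ) ≤ 2 ^ 2), Real.sqrt_sq (by norm_num : (0:ℝ) ≤ 2)]
    have hub : ∑ j ∈ Finset.Icc c k, E ω j - q c < 2 * eps c := by
      rw [Finset.mem_Icc] at hc
      rcases Nat.lt_or_ge c 2 with h2 | h2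
      · have hc1 : c = 1 := by omega
        subst hc1
        rw [hTs 1 (Finset.mem_Icc.mpr ⟨le_refl 1, hk⟩), tailT_one, hqdef]
        simp only [hp1]
        simp
        exact hepspos 1 (Finset.mem_Icc.mpr ⟨le_refl 1, hk⟩)
      · obtain ⟨n, rfl⟩ : ∃ n, c = n + 1 := ⟨c - 1, by omega⟩
        have hT : tailT (phat ω) eps (n + 1) ≤ phat ω (n + 1) + eps (n + 1) := by
          rw [tailT_succ (phat ω) eps (by omega : 1 ≤ n)]
          exact min_le_right _ _
        rw [hTs (n + 1) (Finset.mem_Icc.mpr ⟨by omega, hc.2⟩)]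
        have := hle (n + 1) (Finset.mem_Icc.mpr ⟨by omega, hc.2⟩)
        linarith
    have hlb : 0 ≤ ∑ j ∈ Finset.Icc c k, E ω j - q c := by
      have := hdom c hc
      rw [hqdef]
      simp only []
      linarith
    rw [abs_of_nonneg hlb, ← hLdef, hsqrt2]
    exact lt_of_lt_of_le hub (le_of_eq rfl)
  -- conclude
  calc ENNReal.ofReal (1 - δ) = 1 - ENNReal.ofReal δ := by
        rw [ENNReal.ofReal_sub 1 hδ0.le, ENNReal.ofReal_one]
    _ ≤ 1 - P U := tsub_le_tsub_left hUbound 1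
    _ = P Uᶜ := (prob_compl_eq_one_sub hUmeas).symm
    _ ≤ P _ := measure_mono hsubset
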